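/- Let ν̂ : [0,∞) → [0,∞) and ν̄ > 0 satisfy the Lipschitz property |ν̂(s)s − ν̂(t)t| ≤ ν̄ |s − t| for all s, t ≥ 0. Then the radial vector field a : ℝ³ → ℝ³, a(y) = ν̂(‖y‖) y, is Lipschitz continuous with constant 3ν̄: ‖a(x) − a(y)‖ ≤ 3ν̄ ‖x − y‖ for all x, y ∈ ℝ³, where ‖·‖ is the Euclidean norm on ℝ³. -/
import Mathlib


/-- If `ν̂ : [0,∞) → [0,∞)` and `s ↦ ν̂(s)s` is Lipschitz with constant `ν̄ > 0`, then
the radial vector field `a(y) = ν̂(‖y‖) y` on `ℝ³` is Lipschitz with constant `3ν̄`: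
`‖a(x) − a(y)‖ ≤ 3ν̄ ‖x − y‖`. Here `νbar` plays the role of `ν̄`. -/
theorem stmt9 (ν' : ℝ → ℝ) (νbar : ℝ) (hνbar : 0 < νbar)
    (hpos : ∀ s : ℝ, 0 ≤ s → 0 ≤ ν' s)
    (hlip : ∀ s t : ℝ, 0 ≤ s → 0 ≤ t → |ν' s * s - ν' t * t| ≤ νbar * |s - t|) :
    ∀ x y : EuclideanSpace ℝ (Fin 3),
      ‖(ν' ‖x‖) • x - (ν' ‖y‖) • y‖ ≤ 3 * νbar * ‖x - y‖ := by
  have key : ∀ s : ℝ, 0 ≤ s → ν' s * s ≤ νbar * s := by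
    intro s hs
    calc ν' s * s ≤ |ν' s * s| := le_abs_self _
      _ ≤ νbar * s := by simpa [abs_of_nonneg hs] using hlip s 0 hs le_rfl
  intro x y
  rcases eq_or_ne x 0 with rfl | hx
  · have h1 : ν' ‖y‖ * ‖y‖ ≤ νbar * ‖y‖ := key _ (norm_nonneg y)
    have h2 : ‖(ν' ‖(0 : EuclideanSpace ℝ (Fin 3))‖) • (0 : EuclideanSpace ℝ (Fin 3))
        - ν' ‖y‖ • y‖ = ν' ‖y‖ * ‖y‖ := by
      rw [smul_zero, zero_sub, norm_neg, norm_smul, Real.norm_eq_abs,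
        abs_of_nonneg (hpos _ (norm_nonneg y))]
    rw [h2, zero_sub, norm_neg]
    nlinarith [norm_nonneg y]
  rcases eq_or_ne y 0 with rfl | hy
  · have h1 : ν' ‖x‖ * ‖x‖ ≤ νbar * ‖x‖ := key _ (norm_nonneg x)
    have h2 : ‖(ν' ‖x‖) • x
        - ν' ‖(0 : EuclideanSpace ℝ (Fin 3))‖ • (0 : EuclideanSpace ℝ (Fin 3))‖
        = ν' ‖x‖ * ‖x‖ := by
      rw [smul_zero, sub_zero, norm_smul, Real.norm_eq_abs,
        abs_of_nonneg (hpos _ (norm_nonneg x))]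
    rw [h2, sub_zero]
    nlinarith [norm_nonneg x]
  have hx' : 0 < ‖x‖ := norm_pos_iff.mpr hx
  have hbound : ν' ‖x‖ ≤ νbar := by
    have := key ‖x‖ (norm_nonneg x)
    exact le_of_mul_le_mul_right this hx'
  have split : (ν' ‖x‖) • x - (ν' ‖y‖) • y
      = (ν' ‖x‖) • (x - y) + (ν' ‖x‖ - ν' ‖y‖) • y := by
    rw [smul_sub, sub_smul]; abel
  rw [split]
  have hnorms : |‖x‖ - ‖y‖| ≤ ‖x - y‖ := abs_norm_sub_norm_le x y
  have hnorms' : |‖y‖ - ‖x‖| ≤ ‖x - y‖ := by rw [abs_sub_comm]; exact hnorms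
  have h1 : ‖(ν' ‖x‖) • (x - y)‖ ≤ νbar * ‖x - y‖ := by
    rw [norm_smul, Real.norm_eq_abs, abs_of_nonneg (hpos _ (norm_nonneg x))]
    exact mul_le_mul_of_nonneg_right hbound (norm_nonneg _)
  have h2 : ‖(ν' ‖x‖ - ν' ‖y‖) • y‖ ≤ 2 * νbar * ‖x - y‖ := by
    rw [norm_smul, Real.norm_eq_abs]
    have e : |ν' ‖x‖ * ‖y‖ - ν' ‖y‖ * ‖y‖| = |ν' ‖x‖ - ν' ‖y‖| * ‖y‖ := by
      rw [← sub_mul, abs_mul, abs_norm]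
    rw [← e]
    have ha : |ν' ‖x‖ * ‖y‖ - ν' ‖x‖ * ‖x‖| ≤ νbar * ‖x - y‖ := by
      rw [← mul_sub, abs_mul, abs_of_nonneg (hpos _ (norm_nonneg x))]
      calc ν' ‖x‖ * |‖y‖ - ‖x‖| ≤ νbar * |‖y‖ - ‖x‖| :=
            mul_le_mul_of_nonneg_right hbound (abs_nonneg _)
        _ ≤ νbar * ‖x - y‖ := mul_le_mul_of_nonneg_left hnorms' hνbar.le
    have hb : |ν' ‖x‖ * ‖x‖ - ν' ‖y‖ * ‖y‖| ≤ νbar * ‖x - y‖ :=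
      le_trans (hlip _ _ (norm_nonneg x) (norm_nonneg y))
        (mul_le_mul_of_nonneg_left hnorms hνbar.le)
    calc |ν' ‖x‖ * ‖y‖ - ν' ‖y‖ * ‖y‖|
        ≤ |ν' ‖x‖ * ‖y‖ - ν' ‖x‖ * ‖x‖| + |ν' ‖x‖ * ‖x‖ - ν' ‖y‖ * ‖y‖| :=
          abs_sub_le _ _ _
      _ ≤ 2 * νbar * ‖x - y‖ := by linarith
  calc ‖(ν' ‖x‖) • (x - y) + (ν' ‖x‖ - ν' ‖y‖) • y‖
      ≤ ‖(ν' ‖x‖) • (x - y)‖ + ‖(ν' ‖x‖ - ν' ‖y‖) • y‖ := norm_add_le _ _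
    _ ≤ 3 * νbar * ‖x - y‖ := by linarith
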